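/- If R is an algebraic curvature tensor on a 2-dimensional real vector space V, then R = R_φ for some symmetric bilinear form φ on V. -/

import Mathlib

/-- The canonical algebraic curvature tensor built from a symmetric bilinear form. -/
def canACT {V : Type*} [AddCommGroup V] [Module ℝ V]
    (φ : LinearMap.BilinForm ℝ V) (x y z w : V) : ℝ :=
  φ x w * φ y z - φ x z * φ y w

theorem stmt17 {V : Type*} [AddCommGroup V] [Module ℝ V] [FiniteDimensional ℝ V]
    (hdim : Module.finrank ℝ V = 2)
    (R : V →ₗ[ℝ] V →ₗ[ℝ] V →ₗ[ℝ] V →ₗ[ℝ] ℝ)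
    (hanti : ∀ x y z w : V, R x y z w = - R y x z w)
    (hpair : ∀ x y z w : V, R x y z w = R z w x y)
    (hbianchi : ∀ x y z w : V, R x y z w + R x z w y + R x w y z = 0) :
    ∃ φ : LinearMap.BilinForm ℝ V, (∀ x y : V, φ x y = φ y x) ∧
      ∀ x y z w : V, R x y z w = canACT φ x y z w := by
  classical
  let b : Module.Basis (Fin 2) ℝ V := Module.finBasisOfFinrankEq ℝ V hdim
  set k : ℝ := R (b 0) (b 1) (b 0) (b 1) with hk
  -- derived antisymmetry in the second pair
  have hanti2 : ∀ x y z w : V, R x y z w = - R x y w z := by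
    intro x y z w
    rw [hpair, hanti, hpair]
  have hxx : ∀ x z w : V, R x x z w = 0 := by
    intro x z w
    have := hanti x x z w; linarith
  have hzz : ∀ x y z : V, R x y z z = 0 := by
    intro x y z
    have := hanti2 x y z z; linarith
  obtain ⟨o, d, hod⟩ : ∃ o d : ℝ, o ^ 2 - d ^ 2 = k := by
    rcases le_or_gt 0 k with h | h
    · exact ⟨Real.sqrt k, 0, by rw [Real.sq_sqrt h]; ring⟩
    · exact ⟨0, Real.sqrt (-k), by rw [Real.sq_sqrt (by linarith)]; ring⟩
  let M : Fin 2 → Fin 2 → ℝ := ![![d, o], ![o, d]]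
  let φ : LinearMap.BilinForm ℝ V := b.constr ℝ fun i => b.constr ℝ fun j => M i j
  have hφb : ∀ i j : Fin 2, φ (b i) (b j) = M i j := by
    intro i j
    simp only [φ, Module.Basis.constr_basis]
  have hrep : ∀ v : V, ∃ a c : ℝ, v = a • b 0 + c • b 1 := by
    intro v
    refine ⟨b.repr v 0, b.repr v 1, ?_⟩
    have := b.sum_repr v
    rw [Fin.sum_univ_two] at this
    exact this.symm
  refine ⟨φ, ?_, ?_⟩
  · intro x y
    obtain ⟨x0, x1, hx⟩ := hrep x
    obtain ⟨y0, y1, hy⟩ := hrep y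
    have h01 : φ (b 0) (b 1) = o := hφb 0 1
    have h10 : φ (b 1) (b 0) = o := hφb 1 0
    have h00 : φ (b 0) (b 0) = d := hφb 0 0
    have h11 : φ (b 1) (b 1) = d := hφb 1 1
    simp only [hx, hy, map_add, map_smul, LinearMap.add_apply, LinearMap.smul_apply,
      smul_eq_mul, h01, h10, h00, h11]
    ring
  · intro x y z w
    obtain ⟨x0, x1, hx⟩ := hrep x
    obtain ⟨y0, y1, hy⟩ := hrep y
    obtain ⟨z0, z1, hz⟩ := hrep z
    obtain ⟨w0, w1, hw⟩ := hrep w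
    have h0101 : R (b 0) (b 1) (b 0) (b 1) = o ^ 2 - d ^ 2 := by rw [← hk, hod]
    have h0110 : R (b 0) (b 1) (b 1) (b 0) = -(o ^ 2 - d ^ 2) := by
      rw [hanti2, h0101]
    have h1001 : R (b 1) (b 0) (b 0) (b 1) = -(o ^ 2 - d ^ 2) := by
      rw [hanti, h0101]
    have h1010 : R (b 1) (b 0) (b 1) (b 0) = o ^ 2 - d ^ 2 := by
      rw [hanti, h0110]; ring
    have h01 : φ (b 0) (b 1) = o := hφb 0 1
    have h10 : φ (b 1) (b 0) = o := hφb 1 0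
    have h00 : φ (b 0) (b 0) = d := hφb 0 0
    have h11 : φ (b 1) (b 1) = d := hφb 1 1
    simp only [canACT, hx, hy, hz, hw, map_add, map_smul, LinearMap.add_apply,
      LinearMap.smul_apply, smul_eq_mul, hxx, hzz, h0101, h0110, h1001, h1010,
      h01, h10, h00, h11]
    ring
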